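/- For the logarithmic gluing profile φ(δ) = −ln δ, the composition rule g(δ₁, δ₂) = φ⁻¹(φ(δ₁) + φ(δ₂)) equals δ₁·δ₂, and hence extends to a smooth (indeed real-analytic) function on [0,1]², whereas for the standard gluing profile φ(δ) = 1/δ − 1 the corresponding function δ₁δ₂/(δ₁ + δ₂ − δ₁δ₂) does not extend to a C¹ function on a neighborhood of (0,0) in [0,1]². -/

import Mathlib

open Set

/-- For the logarithmic gluing profile `φ(δ) = -ln δ`, with inverse `φ⁻¹(t) = e^{-t}`,
the composition rule `g(δ₁,δ₂) = φ⁻¹(φ(δ₁) + φ(δ₂))` equals `δ₁·δ₂`, hence extends to a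
smooth (real-analytic) function on `[0,1]²`; whereas for the standard gluing profile
`φ(δ) = 1/δ - 1` the corresponding function `δ₁δ₂/(δ₁+δ₂-δ₁δ₂)` does not extend to a
`C¹` function on any neighborhood of `(0,0)` in `[0,1]²`. -/
theorem logarithmic_profile_smooth_standard_profile_not_C1 :
    (∀ δ₁ ∈ Ioc (0:ℝ) 1, ∀ δ₂ ∈ Ioc (0:ℝ) 1,
      Real.exp (-((-Real.log δ₁) + (-Real.log δ₂))) = δ₁ * δ₂) ∧
    (ContDiff ℝ ⊤ (fun p : ℝ × ℝ => p.1 * p.2) ∧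
      AnalyticOn ℝ (fun p : ℝ × ℝ => p.1 * p.2) univ) ∧
    ¬ ∃ (V : Set (ℝ × ℝ)) (F : ℝ × ℝ → ℝ),
        V ∈ nhdsWithin (0, 0) (Icc 0 1 ×ˢ Icc 0 1) ∧
        ContDiffOn ℝ 1 F V ∧
        (∀ p ∈ V ∩ (Ioc 0 1 ×ˢ Ioc 0 1),
          F p = p.1 * p.2 / (p.1 + p.2 - p.1 * p.2)) := by
  refine ⟨?_, ⟨contDiff_fst.mul contDiff_snd, analyticOn_fst.mul analyticOn_snd⟩, ?_⟩
  · intro δ₁ h1 δ₂ h2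
    rw [neg_add, neg_neg, neg_neg, Real.exp_add, Real.exp_log h1.1, Real.exp_log h2.1]
  rintro ⟨V, F, hV, hF, hEq⟩
  obtain ⟨U, hU, h0U, hUV⟩ := mem_nhdsWithin.1 hV
  obtain ⟨r, hr, hball⟩ := Metric.isOpen_iff.1 hU _ h0U
  set ε : ℝ := min r 1 with hεdef
  have hε0 : 0 < ε := lt_min hr one_pos
  have hε1 : ε ≤ 1 := min_le_right r 1
  have hεr : ε ≤ r := min_le_left r 1
  have key : ∀ t s : ℝ, 0 < t → t < ε → 0 < s → s < ε →
      (t, s) ∈ V ∩ (Ioc 0 1 ×ˢ Ioc 0 1) := by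
    intro t s ht htε hs hsε
    have ht1 : t ≤ 1 := le_of_lt (lt_of_lt_of_le htε hε1)
    have hs1 : s ≤ 1 := le_of_lt (lt_of_lt_of_le hsε hε1)
    have hIoc : (t, s) ∈ Ioc (0:ℝ) 1 ×ˢ Ioc (0:ℝ) 1 := ⟨⟨ht, ht1⟩, ⟨hs, hs1⟩⟩
    refine ⟨hUV ⟨hball ?_, ⟨⟨ht.le, ht1⟩, ⟨hs.le, hs1⟩⟩⟩, hIoc⟩
    have hd : dist ((t, s) : ℝ × ℝ) ((0:ℝ), (0:ℝ)) = max t s := by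
      rw [Prod.dist_eq]
      simp [Real.dist_eq, abs_of_pos ht, abs_of_pos hs]
    rw [Metric.mem_ball, hd]
    exact max_lt (lt_of_lt_of_le htε hεr) (lt_of_lt_of_le hsε hεr)
  have h0V : ((0:ℝ), (0:ℝ)) ∈ V :=
    hUV ⟨h0U, ⟨⟨le_rfl, zero_le_one⟩, ⟨le_rfl, zero_le_one⟩⟩⟩
  obtain ⟨L, hL⟩ : DifferentiableWithinAt ℝ F V (0, 0) :=
    (hF.differentiableOn one_ne_zero) (0, 0) h0V
  set S : Set ℝ := Ioo 0 ε with hSdef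
  have hud : UniqueDiffWithinAt ℝ S 0 :=
    uniqueDiffWithinAt_convex (convex_Ioo _ _)
      (by rw [interior_Ioo]; exact nonempty_Ioo.2 hε0)
      (by rw [closure_Ioo hε0.ne]; exact ⟨le_rfl, hε0.le⟩)
  have hne : (nhdsWithin (0:ℝ) S).NeBot := by
    rw [← mem_closure_iff_nhdsWithin_neBot, hSdef, closure_Ioo hε0.ne]
    exact ⟨le_rfl, hε0.le⟩
  haveI := hne
  -- points on the diagonal and the two curves are in V and in the open square
  have hdmem : ∀ t ∈ S, (t, t) ∈ V ∩ (Ioc 0 1 ×ˢ Ioc 0 1) := fun t ht =>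
    key t t ht.1 ht.2 ht.1 ht.2
  have hsq : ∀ t ∈ S, 0 < t ^ 2 ∧ t ^ 2 < ε := by
    intro t ht
    constructor
    · exact pow_pos ht.1 2
    · calc t ^ 2 = t * t := sq t
        _ ≤ 1 * t := by nlinarith [ht.1, ht.2, hε1]
        _ = t := one_mul t
        _ < ε := ht.2
  have hc2mem : ∀ t ∈ S, (t, t ^ 2) ∈ V ∩ (Ioc 0 1 ×ˢ Ioc 0 1) := fun t ht =>
    key t (t ^ 2) ht.1 ht.2 (hsq t ht).1 (hsq t ht).2
  have hc3mem : ∀ t ∈ S, (t ^ 2, t) ∈ V ∩ (Ioc 0 1 ×ˢ Ioc 0 1) := fun t ht =>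
    key (t ^ 2) t (hsq t ht).1 (hsq t ht).2 ht.1 ht.2
  -- composition with the diagonal curve
  have hγ1 : HasDerivWithinAt (fun t : ℝ => ((t, t) : ℝ × ℝ)) ((1:ℝ), (1:ℝ)) S 0 :=
    (HasDerivAt.prodMk (hasDerivAt_id (0:ℝ)) (hasDerivAt_id (0:ℝ))).hasDerivWithinAt
  have h1 : HasDerivWithinAt (fun t : ℝ => F (t, t)) (L (1, 1)) S 0 := by
    have := HasFDerivWithinAt.comp_hasDerivWithinAt (l := F)
      (f := fun t : ℝ => ((t, t) : ℝ × ℝ)) 0 hL hγ1 (fun t ht => (hdmem t ht).1)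
    exact this
  -- F along the diagonal
  have hdiag : ∀ t ∈ S, F (t, t) = t / (2 - t) := by
    intro t ht
    rw [hEq _ (hdmem t ht)]
    have ht0 : t ≠ 0 := ne_of_gt ht.1
    have e1 : t + t - t * t = t * (2 - t) := by ring
    rw [e1, show t * t / (t * (2 - t)) = t / (2 - t) from mul_div_mul_left t (2 - t) ht0]
  -- F (0,0) = 0
  have hlim2 : Filter.Tendsto (fun t : ℝ => F (t, t)) (nhdsWithin 0 S) (nhds 0) := by
    have hc : ContinuousAt (fun t : ℝ => t / (2 - t)) 0 := by
      apply ContinuousAt.div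
      · fun_prop
      · fun_prop
      · norm_num
    have hc' : Filter.Tendsto (fun t : ℝ => t / (2 - t))
        (nhdsWithin 0 S) (nhds 0) := by
      have := hc.tendsto
      simp only [zero_div] at this
      exact this.mono_left nhdsWithin_le_nhds
    refine hc'.congr' ?_
    filter_upwards [self_mem_nhdsWithin] with t ht
    exact (hdiag t ht).symm
  have hF0 : F (0, 0) = 0 := tendsto_nhds_unique h1.continuousWithinAt hlim2
  have hF0' : F (0 : ℝ × ℝ) = 0 := hF0
  -- identify L (1,1) = 1/2
  have hD : HasDerivWithinAt (fun t : ℝ => t / (2 - t)) ((1:ℝ)/2) S 0 := by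
    have := ((hasDerivAt_id (0:ℝ)).div
      ((hasDerivAt_const (0:ℝ) (2:ℝ)).sub (hasDerivAt_id 0)) (by norm_num)).hasDerivWithinAt (s := S)
    exact this.congr_deriv (by norm_num)
  have h1' : HasDerivWithinAt (fun t : ℝ => t / (2 - t)) (L (1, 1)) S 0 :=
    h1.congr (fun t ht => (hdiag t ht).symm) (by simp [hF0])
  have hL11 : L (1, 1) = 1 / 2 := hud.eq_deriv S h1' hD
  -- curve (t, t^2)
  have hpow : HasDerivAt (fun t : ℝ => t ^ 2) 0 0 := by
    simpa using hasDerivAt_pow 2 (0:ℝ)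
  have hγ2 : HasDerivWithinAt (fun t : ℝ => ((t, t ^ 2) : ℝ × ℝ)) ((1:ℝ), (0:ℝ)) S 0 :=
    (HasDerivAt.prodMk (hasDerivAt_id (0:ℝ)) hpow).hasDerivWithinAt
  have h2 : HasDerivWithinAt (fun t : ℝ => F (t, t ^ 2)) (L (1, 0)) S 0 := by
    have := HasFDerivWithinAt.comp_hasDerivWithinAt (l := F)
      (f := fun t : ℝ => ((t, t ^ 2) : ℝ × ℝ)) 0 (by simpa using hL) hγ2
      (fun t ht => (hc2mem t ht).1)
    exact this
  have hg2 : HasDerivWithinAt (fun t : ℝ => t ^ 2 / (1 + t - t ^ 2)) (0:ℝ) S 0 := by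
    have hden : HasDerivAt (fun t : ℝ => 1 + t - t ^ 2) (0 + 1 - 0) 0 :=
      (((hasDerivAt_const (0:ℝ) (1:ℝ)).add (hasDerivAt_id 0)).sub hpow)
    have := (hpow.div hden (by norm_num)).hasDerivWithinAt (s := S)
    exact this.congr_deriv (by norm_num)
  have heq2 : ∀ t ∈ S, F (t, t ^ 2) = t ^ 2 / (1 + t - t ^ 2) := by
    intro t ht
    rw [hEq _ (hc2mem t ht)]
    have ht0 : t ≠ 0 := ne_of_gt ht.1
    have e1 : t + t ^ 2 - t * t ^ 2 = t * (1 + t - t ^ 2) := by ring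
    have e2 : t * t ^ 2 = t * t ^ 2 := rfl
    rw [e1, show t * t ^ 2 / (t * (1 + t - t ^ 2)) = t ^ 2 / (1 + t - t ^ 2) from
      mul_div_mul_left _ _ ht0]
  have h2' : HasDerivWithinAt (fun t : ℝ => t ^ 2 / (1 + t - t ^ 2)) (L (1, 0)) S 0 :=
    h2.congr (fun t ht => (heq2 t ht).symm) (by simp [hF0])
  have hL10 : L (1, 0) = 0 := hud.eq_deriv S h2' hg2
  -- curve (t^2, t)
  have hγ3 : HasDerivWithinAt (fun t : ℝ => ((t ^ 2, t) : ℝ × ℝ)) ((0:ℝ), (1:ℝ)) S 0 :=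
    (hpow.prodMk (hasDerivAt_id (0:ℝ))).hasDerivWithinAt
  have h3 : HasDerivWithinAt (fun t : ℝ => F (t ^ 2, t)) (L (0, 1)) S 0 := by
    have := HasFDerivWithinAt.comp_hasDerivWithinAt (l := F)
      (f := fun t : ℝ => ((t ^ 2, t) : ℝ × ℝ)) 0 (by simpa using hL) hγ3
      (fun t ht => (hc3mem t ht).1)
    exact this
  have heq3 : ∀ t ∈ S, F (t ^ 2, t) = t ^ 2 / (1 + t - t ^ 2) := by
    intro t ht
    rw [hEq _ (hc3mem t ht)]
    have ht0 : t ≠ 0 := ne_of_gt ht.1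
    have e1 : t ^ 2 + t - t ^ 2 * t = t * (1 + t - t ^ 2) := by ring
    have e2 : t ^ 2 * t = t * t ^ 2 := by ring
    rw [e1, e2, show t * t ^ 2 / (t * (1 + t - t ^ 2)) = t ^ 2 / (1 + t - t ^ 2) from
      mul_div_mul_left _ _ ht0]
  have h3' : HasDerivWithinAt (fun t : ℝ => t ^ 2 / (1 + t - t ^ 2)) (L (0, 1)) S 0 :=
    h3.congr (fun t ht => (heq3 t ht).symm) (by simp [hF0])
  have hL01 : L (0, 1) = 0 := hud.eq_deriv S h3' hg2
  have hsum : L (1, 1) = L (1, 0) + L (0, 1) := by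
    rw [← map_add]
    norm_num
  rw [hL11, hL10, hL01] at hsum
  norm_num at hsum
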